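/- For any rooted tree T with n vertices, the sum over all rooted subtrees T₀ of T (including the empty subtree and T itself) of the tree binomial coefficient C(T, T₀) = T!/(T₀! · ∏_{T' ∈ T∖T₀} T'!) equals 2^n. -/

import Mathlib

/-- A labeled rooted tree on the vertex set `Fin n`. -/
def IsRTree (n : ℕ) (rp : Fin n × (Fin n → Fin n)) : Prop :=
  rp.2 rp.1 = rp.1 ∧ ∀ j : Fin n, ∃ k : ℕ, rp.2^[k] j = rp.1

/-- The number of vertices in the subtree rooted at `j` (the vertices weakly above `j`). -/
noncomputable def cardAbove (n : ℕ) (rp : Fin n × (Fin n → Fin n)) (j : Fin n) : ℕ :=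
  Nat.card {i : Fin n // ∃ k : ℕ, rp.2^[k] i = j}

open Finset

open Classical in
/-- The subtree (set of descendants, weakly) above `i`. -/
noncomputable def TA {n : ℕ} (rp : Fin n × (Fin n → Fin n)) (i : Fin n) : Finset (Fin n) :=
  Finset.univ.filter (fun x => ∃ k : ℕ, rp.2^[k] x = i)

/-- `S` is a sub-forest of the upward-closed set `D`. -/
def SubF {n : ℕ} (rp : Fin n × (Fin n → Fin n)) (D S : Finset (Fin n)) : Prop :=
  S ⊆ D ∧ ∀ i ∈ S, rp.2 i ∈ D → rp.2 i ∈ S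

/-- `S` is a rooted subtree of the subtree above `m` (or empty). -/
def Rooted {n : ℕ} (rp : Fin n × (Fin n → Fin n)) (m : Fin n) (S : Finset (Fin n)) : Prop :=
  S = ∅ ∨ (m ∈ S ∧ S ⊆ TA rp m ∧ ∀ i ∈ S, i ≠ m → rp.2 i ∈ S)

/-- `D` is upward closed (closed under passing to children). -/
def UC {n : ℕ} (rp : Fin n × (Fin n → Fin n)) (D : Finset (Fin n)) : Prop :=
  ∀ i ∈ D, ∀ j, rp.2 j = i → j ≠ rp.1 → j ∈ D

/-- The weight of a subforest. -/
noncomputable def fw {n : ℕ} (rp : Fin n × (Fin n → Fin n)) (S : Finset (Fin n)) : ℚ :=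
  ∏ i ∈ S, ((TA rp i).card : ℚ) / ((TA rp i ∩ S).card : ℚ)

section Basic

variable {n : ℕ} {rp : Fin n × (Fin n → Fin n)}

lemma mem_TA {x i : Fin n} : x ∈ TA rp i ↔ ∃ k : ℕ, rp.2^[k] x = i := by
  simp [TA]

lemma self_mem_TA (i : Fin n) : i ∈ TA rp i := mem_TA.2 ⟨0, rfl⟩

lemma parent_mem_TA {i m : Fin n} (hi : i ∈ TA rp m) (hne : i ≠ m) : rp.2 i ∈ TA rp m := by
  obtain ⟨k, hk⟩ := mem_TA.1 hi
  cases k with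
  | zero => exact absurd hk hne
  | succ k => exact mem_TA.2 ⟨k, by rwa [Function.iterate_succ_apply] at hk⟩

lemma TA_subset_TA {i m : Fin n} (hi : i ∈ TA rp m) : TA rp i ⊆ TA rp m := by
  obtain ⟨k, hk⟩ := mem_TA.1 hi
  intro x hx
  obtain ⟨l, hl⟩ := mem_TA.1 hx
  exact mem_TA.2 ⟨k + l, by rw [Function.iterate_add_apply, hl, hk]⟩

lemma TA_antisymm (h : IsRTree n rp) {i m : Fin n} (hi : i ∈ TA rp m) (hm : m ∈ TA rp i) :
    i = m := by
  obtain ⟨k, hk⟩ := mem_TA.1 hi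
  obtain ⟨l, hl⟩ := mem_TA.1 hm
  rcases Nat.eq_zero_or_pos (k + l) with h0 | hpos
  · obtain ⟨hk0, -⟩ := Nat.add_eq_zero.1 h0
    subst hk0; exact hk
  · -- i has a cycle of positive length, hence i = root
    have hcyc : rp.2^[l + k] i = i := by
      rw [Function.iterate_add_apply, hk, hl]
    obtain ⟨d, hd⟩ := h.2 i
    have hfix : ∀ j : ℕ, rp.2^[j * (l + k)] i = i := by
      intro j
      induction j with
      | zero => simp
      | succ j ih => rw [Nat.succ_mul, Function.iterate_add_apply, hcyc, ih]
    have hbig : ∀ s : ℕ, d ≤ s → rp.2^[s] i = rp.1 := by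
      intro s hs
      have : rp.2^[s - d + d] i = rp.2^[s - d] (rp.2^[d] i) := Function.iterate_add_apply _ _ _ _
      rw [Nat.sub_add_cancel hs] at this
      rw [this, hd, Function.iterate_fixed h.1]
    have hir : i = rp.1 := by
      have h1 : d ≤ d * (l + k) := by
        calc d = d * 1 := (mul_one d).symm
        _ ≤ d * (l + k) := Nat.mul_le_mul_left d (by omega)
      rw [← hfix d, hbig _ h1]
    have : m = rp.1 := by rw [← hk, hir, Function.iterate_fixed h.1]
    rw [hir, this]

lemma TA_comparable {x i m : Fin n} (hxi : x ∈ TA rp i) (hxm : x ∈ TA rp m) :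
    i ∈ TA rp m ∨ m ∈ TA rp i := by
  obtain ⟨k, hk⟩ := mem_TA.1 hxm
  obtain ⟨l, hl⟩ := mem_TA.1 hxi
  rcases le_total l k with hle | hle
  · left
    refine mem_TA.2 ⟨k - l, ?_⟩
    rw [← hl, ← Function.iterate_add_apply, Nat.sub_add_cancel hle, hk]
  · right
    refine mem_TA.2 ⟨l - k, ?_⟩
    rw [← hk, ← Function.iterate_add_apply, Nat.sub_add_cancel hle, hl]

lemma UC_TA_subset (h : IsRTree n rp) {D : Finset (Fin n)} (hUC : UC rp D) {m : Fin n}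
    (hm : m ∈ D) : TA rp m ⊆ D := by
  intro x hx
  obtain ⟨k, hk⟩ := mem_TA.1 hx
  clear hx
  induction k generalizing x with
  | zero =>
    have hxm : x = m := hk
    rwa [hxm]
  | succ k ih =>
    rw [Function.iterate_succ_apply] at hk
    have hpx : rp.2 x ∈ D := ih hk
    by_cases hxr : x = rp.1
    · have hfix : rp.2 x = x := by rw [hxr]; exact h.1
      rwa [← hfix]
    · exact hUC _ hpx x rfl hxr

lemma exists_min_elt (h : IsRTree n rp) {D : Finset (Fin n)} (hUC : UC rp D)
    (hne : D.Nonempty) :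
    ∃ m ∈ D, TA rp m ⊆ D ∧ (rp.2 m = m ∨ rp.2 m ∉ D) := by
  obtain ⟨m, hmD, hmin⟩ := D.exists_min_image (fun j => Nat.find (h.2 j)) hne
  refine ⟨m, hmD, UC_TA_subset h hUC hmD, ?_⟩
  by_cases hpm : rp.2 m = m
  · exact Or.inl hpm
  · right
    intro hpmD
    have hmr : m ≠ rp.1 := fun hr => hpm (hr ▸ h.1)
    have hdm : Nat.find (h.2 m) ≠ 0 := by
      intro h0
      have hsp := Nat.find_spec (h.2 m)
      rw [h0] at hsp
      exact hmr hsp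
    have hspec : rp.2^[Nat.find (h.2 m)] m = rp.1 := Nat.find_spec (h.2 m)
    have hlt : Nat.find (h.2 (rp.2 m)) < Nat.find (h.2 m) := by
      have hle : Nat.find (h.2 (rp.2 m)) ≤ Nat.find (h.2 m) - 1 := by
        apply Nat.find_le
        rw [← Function.iterate_succ_apply]
        show rp.2^[Nat.find (h.2 m) - 1 + 1] m = rp.1
        rw [Nat.sub_add_cancel (Nat.one_le_iff_ne_zero.2 hdm)]
        exact hspec
      omega
    have := hmin _ hpmD
    omega

/-- Key: if `m` is a "local root" of `D`, then no element of `D \ TA m` is an ancestor of `m`. -/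
lemma not_anc (h : IsRTree n rp) {D : Finset (Fin n)} (hUC : UC rp D) {m : Fin n}
    (hm : m ∈ D) (hm' : rp.2 m = m ∨ rp.2 m ∉ D) {i : Fin n} (hiD : i ∈ D)
    (hiTA : i ∉ TA rp m) : m ∉ TA rp i := by
  intro hmem
  obtain ⟨k, hk⟩ := mem_TA.1 hmem
  rcases hm' with hfix | hpm
  · exact hiTA (by rw [← hk, Function.iterate_fixed hfix]; exact self_mem_TA m)
  · cases k with
    | zero => exact hiTA (hk ▸ self_mem_TA m)
    | succ k =>
      -- rp.2^[k+1] m = i ∈ D implies rp.2 m ∈ D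
      have key : ∀ j : ℕ, rp.2^[j + 1] m ∈ D → rp.2 m ∈ D := by
        intro j
        induction j with
        | zero => simp
        | succ j ih =>
          intro hj
          apply ih
          rw [Function.iterate_succ_apply'] at hj
          by_cases hr : rp.2^[j + 1] m = rp.1
          · rw [hr]
            rw [hr, h.1] at hj
            exact hj
          · exact hUC _ hj _ rfl hr
      exact hpm (key k (hk ▸ hiD))

lemma TA_disj (h : IsRTree n rp) {D : Finset (Fin n)} (hUC : UC rp D) {m : Fin n}
    (hm : m ∈ D) (hm' : rp.2 m = m ∨ rp.2 m ∉ D) {i : Fin n} (hiD : i ∈ D)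
    (hiTA : i ∉ TA rp m) : ∀ x, x ∈ TA rp i → x ∉ TA rp m := by
  intro x hxi hxm
  rcases TA_comparable hxi hxm with hc | hc
  · exact hiTA hc
  · exact not_anc h hUC hm hm' hiD hiTA hc

end Basic
section Split

attribute [local instance] Classical.propDecidable

variable {n : ℕ} {rp : Fin n × (Fin n → Fin n)}

lemma rooted_inter (h : IsRTree n rp) {D : Finset (Fin n)} {m : Fin n}
    (hTAD : TA rp m ⊆ D) {S : Finset (Fin n)} (hS : SubF rp D S) :
    Rooted rp m (S ∩ TA rp m) := by
  by_cases hE : S ∩ TA rp m = ∅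
  · exact Or.inl hE
  have hclo : ∀ i ∈ S ∩ TA rp m, i ≠ m → rp.2 i ∈ S ∩ TA rp m := by
    intro i hi hne
    rw [Finset.mem_inter] at hi ⊢
    have hpTA := parent_mem_TA hi.2 hne
    exact ⟨hS.2 i hi.1 (hTAD hpTA), hpTA⟩
  refine Or.inr ⟨?_, Finset.inter_subset_right, hclo⟩
  obtain ⟨i₀, hi₀⟩ := Finset.nonempty_iff_ne_empty.2 hE
  obtain ⟨k, hk⟩ := mem_TA.1 (Finset.mem_inter.1 hi₀).2
  clear hE
  induction k generalizing i₀ with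
  | zero =>
    have : i₀ = m := hk
    exact this ▸ hi₀
  | succ k ih =>
    by_cases him : i₀ = m
    · exact him ▸ hi₀
    · exact ih _ (hclo _ hi₀ him) (by rw [Function.iterate_succ_apply] at hk; exact hk)

lemma subf_sdiff {D : Finset (Fin n)} {m : Fin n} {S : Finset (Fin n)}
    (hS : SubF rp D S) : SubF rp (D \ TA rp m) (S \ TA rp m) := by
  constructor
  · exact Finset.sdiff_subset_sdiff hS.1 (le_refl _)
  · intro i hi hpi
    rw [Finset.mem_sdiff] at hi hpi ⊢
    exact ⟨hS.2 i hi.1 hpi.1, hpi.2⟩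

lemma subf_union (h : IsRTree n rp) {D : Finset (Fin n)} {m : Fin n}
    (hTAD : TA rp m ⊆ D) (hm' : rp.2 m = m ∨ rp.2 m ∉ D)
    {S₁ S₂ : Finset (Fin n)} (h₁ : Rooted rp m S₁) (h₂ : SubF rp (D \ TA rp m) S₂) :
    SubF rp D (S₁ ∪ S₂) := by
  constructor
  · apply Finset.union_subset
    · rcases h₁ with rfl | ⟨-, hsub, -⟩
      · exact Finset.empty_subset D
      · exact hsub.trans hTAD
    · exact h₂.1.trans (Finset.sdiff_subset)
  · intro i hi hpi
    rw [Finset.mem_union] at hi ⊢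
    rcases hi with hi | hi
    · rcases h₁ with rfl | ⟨hmS, hsub, hclo⟩
      · exact absurd hi (Finset.notMem_empty i)
      by_cases him : i = m
      · subst him
        rcases hm' with hfix | hnD
        · exact Or.inl (by rw [hfix]; exact hmS)
        · exact absurd hpi hnD
      · exact Or.inl (hclo i hi him)
    · right
      apply h₂.2 i hi
      rw [Finset.mem_sdiff]
      refine ⟨hpi, fun hpTA => ?_⟩
      have hiTA : i ∈ TA rp m := by
        obtain ⟨k, hk⟩ := mem_TA.1 hpTA
        exact mem_TA.2 ⟨k + 1, by rw [Function.iterate_succ_apply]; exact hk⟩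
      exact (Finset.mem_sdiff.1 (h₂.1 hi)).2 hiTA

lemma disj_NE {D : Finset (Fin n)} {m : Fin n} {S₁ S₂ : Finset (Fin n)}
    (h₁ : Rooted rp m S₁) (h₂ : SubF rp (D \ TA rp m) S₂) : Disjoint S₁ S₂ := by
  rcases h₁ with rfl | ⟨-, hsub, -⟩
  · exact Finset.disjoint_empty_left _
  · refine Finset.disjoint_left.2 fun x hx hx2 => ?_
    exact (Finset.mem_sdiff.1 (h₂.1 hx2)).2 (hsub hx)

/-- weight is multiplicative under the splitting. -/
lemma fw_split (h : IsRTree n rp) {D : Finset (Fin n)} {m : Fin n} (hUC : UC rp D)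
    (hm : m ∈ D) (hm' : rp.2 m = m ∨ rp.2 m ∉ D)
    {S : Finset (Fin n)} (hS : SubF rp D S) :
    fw rp S = fw rp (S ∩ TA rp m) * fw rp (S \ TA rp m) := by
  have hdisj : Disjoint (S ∩ TA rp m) (S \ TA rp m) :=
    Finset.disjoint_left.2 fun x hx hx2 =>
      (Finset.mem_sdiff.1 hx2).2 (Finset.mem_inter.1 hx).2
  have hun : (S ∩ TA rp m) ∪ (S \ TA rp m) = S := by
    ext x
    simp only [Finset.mem_union, Finset.mem_inter, Finset.mem_sdiff]
    tauto
  unfold fw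
  rw [show (∏ i ∈ S, ((TA rp i).card : ℚ) / ((TA rp i ∩ S).card : ℚ))
      = ∏ i ∈ (S ∩ TA rp m) ∪ (S \ TA rp m), ((TA rp i).card : ℚ) / ((TA rp i ∩ S).card : ℚ)
      from by rw [hun]]
  rw [Finset.prod_union hdisj]
  congr 1
  · apply Finset.prod_congr rfl
    intro i hi
    have hiTA := (Finset.mem_inter.1 hi).2
    have hsub := TA_subset_TA hiTA
    have hset : TA rp i ∩ (S ∩ TA rp m) = TA rp i ∩ S := by
      ext x
      simp only [Finset.mem_inter]
      exact ⟨fun hx => ⟨hx.1, hx.2.1⟩, fun hx => ⟨hx.1, hx.2, hsub hx.1⟩⟩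
    rw [hset]
  · apply Finset.prod_congr rfl
    intro i hi
    rw [Finset.mem_sdiff] at hi
    have hdisjTA := TA_disj h hUC hm hm' (hS.1 hi.1) hi.2
    have hset : TA rp i ∩ (S \ TA rp m) = TA rp i ∩ S := by
      ext x
      simp only [Finset.mem_inter, Finset.mem_sdiff]
      exact ⟨fun hx => ⟨hx.1, hx.2.1⟩, fun hx => ⟨hx.1, hx.2, hdisjTA x hx.1⟩⟩
    rw [hset]

end Split
section Tree

attribute [local instance] Classical.propDecidable

variable {n : ℕ} {rp : Fin n × (Fin n → Fin n)}

lemma uc_E (h : IsRTree n rp) {D : Finset (Fin n)} {m : Fin n}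
    (hTAD : TA rp m ⊆ D) (hm' : rp.2 m = m ∨ rp.2 m ∉ D) :
    UC rp ((TA rp m).erase m) := by
  intro i hi j hpj hjr
  rw [Finset.mem_erase] at hi ⊢
  have hjm : j ≠ m := by
    rintro rfl
    rcases hm' with hfix | hnD
    · exact hi.1 (by rw [← hpj, hfix])
    · exact hnD (hpj ▸ hTAD hi.2)
  obtain ⟨k, hk⟩ := mem_TA.1 hi.2
  exact ⟨hjm, mem_TA.2 ⟨k + 1, by rw [Function.iterate_succ_apply, hpj, hk]⟩⟩

lemma uc_D' (h : IsRTree n rp) {D : Finset (Fin n)} {m : Fin n} (hUC : UC rp D)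
    (hm : m ∈ D) (hm' : rp.2 m = m ∨ rp.2 m ∉ D) :
    UC rp (D \ TA rp m) := by
  intro i hi j hpj hjr
  rw [Finset.mem_sdiff] at hi ⊢
  refine ⟨hUC i hi.1 j hpj hjr, fun hjTA => ?_⟩
  by_cases hjm : j = m
  · subst hjm
    rcases hm' with hfix | hnD
    · exact hi.2 (by rw [← hpj, hfix]; exact self_mem_TA _)
    · exact hnD (hpj ▸ hi.1)
  · exact hi.2 (hpj ▸ parent_mem_TA hjTA hjm)

lemma fw_empty : fw rp (∅ : Finset (Fin n)) = 1 := by simp [fw]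

lemma fw_erase (h : IsRTree n rp) {m : Fin n} {S : Finset (Fin n)} (hmS : m ∈ S)
    (hsub : S ⊆ TA rp m) :
    fw rp S = ((TA rp m).card : ℚ) / (S.card : ℚ) * fw rp (S.erase m) := by
  unfold fw
  rw [← Finset.mul_prod_erase S _ hmS]
  congr 1
  · rw [Finset.inter_eq_right.2 hsub]
  · apply Finset.prod_congr rfl
    intro i hi
    rw [Finset.mem_erase] at hi
    have hiTA : i ∈ TA rp m := hsub hi.2
    have hmnTA : m ∉ TA rp i := fun hc => hi.1 (TA_antisymm h hiTA hc)
    have hset : TA rp i ∩ S.erase m = TA rp i ∩ S := by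
      ext x
      simp only [Finset.mem_inter, Finset.mem_erase]
      exact ⟨fun hx => ⟨hx.1, hx.2.2⟩, fun hx => ⟨hx.1, fun hxm => hmnTA (hxm ▸ hx.1), hx.2⟩⟩
    rw [hset]

lemma tree_sum (h : IsRTree n rp) (m : Fin n) (a : ℕ) :
    ∑ S ∈ Finset.univ.filter (fun S => Rooted rp m S ∧ S.card = a + 1), fw rp S
    = ((TA rp m).card : ℚ) / (a + 1) *
      ∑ S ∈ Finset.univ.filter (fun S => SubF rp ((TA rp m).erase m) S ∧ S.card = a),
        fw rp S := by
  rw [Finset.mul_sum]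
  have hget : ∀ S : Finset (Fin n), Rooted rp m S → S.card = a + 1 →
      m ∈ S ∧ S ⊆ TA rp m ∧ ∀ i ∈ S, i ≠ m → rp.2 i ∈ S := by
    intro S hR hc
    rcases hR with rfl | hR
    · simp at hc
    · exact hR
  apply Finset.sum_nbij' (i := fun S => S.erase m) (j := fun S => insert m S)
  · intro S hS
    rw [Finset.mem_filter] at hS ⊢
    obtain ⟨hmS, hsub, hclo⟩ := hget S hS.2.1 hS.2.2
    refine ⟨Finset.mem_univ _, ⟨?_, ?_⟩, ?_⟩
    · exact Finset.erase_subset_erase m hsub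
    · intro i hi hpi
      rw [Finset.mem_erase] at hi hpi ⊢
      exact ⟨hpi.1, hclo i hi.2 hi.1⟩
    · rw [Finset.card_erase_of_mem hmS, hS.2.2]
      omega
  · intro S' hS'
    rw [Finset.mem_filter] at hS' ⊢
    obtain ⟨-, ⟨hsub', hclo'⟩, hc'⟩ := hS'
    have hmnS' : m ∉ S' := fun hc => (Finset.mem_erase.1 (hsub' hc)).1 rfl
    refine ⟨Finset.mem_univ _, Or.inr ⟨Finset.mem_insert_self m S', ?_, ?_⟩, ?_⟩
    · exact Finset.insert_subset (self_mem_TA m) (hsub'.trans (Finset.erase_subset _ _))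
    · intro i hi hine
      rcases Finset.mem_insert.1 hi with rfl | hi'
      · exact absurd rfl hine
      · have hiE := Finset.mem_erase.1 (hsub' hi')
        have hpTA := parent_mem_TA hiE.2 hiE.1
        by_cases hpm : rp.2 i = m
        · rw [hpm]; exact Finset.mem_insert_self m S'
        · exact Finset.mem_insert_of_mem
            (hclo' i hi' (Finset.mem_erase.2 ⟨hpm, hpTA⟩))
    · rw [Finset.card_insert_of_notMem hmnS', hc']
  · intro S hS
    rw [Finset.mem_filter] at hS
    obtain ⟨hmS, -, -⟩ := hget S hS.2.1 hS.2.2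
    exact Finset.insert_erase hmS
  · intro S' hS'
    rw [Finset.mem_filter] at hS'
    have hmnS' : m ∉ S' := fun hc => (Finset.mem_erase.1 (hS'.2.1.1 hc)).1 rfl
    exact Finset.erase_insert hmnS'
  · intro S hS
    rw [Finset.mem_filter] at hS
    obtain ⟨hmS, hsub, -⟩ := hget S hS.2.1 hS.2.2
    rw [fw_erase h hmS hsub, hS.2.2]
    push_cast
    ring

lemma split_sum (h : IsRTree n rp) {D : Finset (Fin n)} {m : Fin n} (hUC : UC rp D)
    (hm : m ∈ D) (hTAD : TA rp m ⊆ D) (hm' : rp.2 m = m ∨ rp.2 m ∉ D) (k : ℕ) :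
    ∑ S ∈ Finset.univ.filter (fun S => SubF rp D S ∧ S.card = k), fw rp S
    = ∑ P ∈ ((Finset.univ.filter (fun S => Rooted rp m S)) ×ˢ
        (Finset.univ.filter (fun S => SubF rp (D \ TA rp m) S))).filter
        (fun P => P.1.card + P.2.card = k), fw rp P.1 * fw rp P.2 := by
  apply Finset.sum_nbij' (i := fun S => (S ∩ TA rp m, S \ TA rp m))
    (j := fun P => P.1 ∪ P.2)
  · intro S hS
    rw [Finset.mem_filter] at hS
    rw [Finset.mem_filter, Finset.mem_product]
    refine ⟨⟨?_, ?_⟩, ?_⟩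
    · exact Finset.mem_filter.2 ⟨Finset.mem_univ _, rooted_inter h hTAD hS.2.1⟩
    · exact Finset.mem_filter.2 ⟨Finset.mem_univ _, subf_sdiff hS.2.1⟩
    · show (S ∩ TA rp m).card + (S \ TA rp m).card = k
      rw [Finset.card_inter_add_card_sdiff, hS.2.2]
  · intro P hP
    rw [Finset.mem_filter, Finset.mem_product, Finset.mem_filter, Finset.mem_filter] at hP
    obtain ⟨⟨⟨-, h1⟩, ⟨-, h2⟩⟩, h3⟩ := hP
    rw [Finset.mem_filter]
    refine ⟨Finset.mem_univ _, subf_union h hTAD hm' h1 h2, ?_⟩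
    rw [Finset.card_union_of_disjoint (disj_NE h1 h2)]
    exact h3
  · intro S hS
    ext x
    simp only [Finset.mem_union, Finset.mem_inter, Finset.mem_sdiff]
    tauto
  · intro P hP
    rw [Finset.mem_filter, Finset.mem_product, Finset.mem_filter, Finset.mem_filter] at hP
    obtain ⟨⟨⟨-, h1⟩, ⟨-, h2⟩⟩, -⟩ := hP
    have hsub₁ : P.1 ⊆ TA rp m := by
      rcases h1 with hP1 | ⟨-, hsub, -⟩
      · rw [hP1]; exact Finset.empty_subset _
      · exact hsub
    have hd₂ : ∀ x ∈ P.2, x ∉ TA rp m := fun x hx =>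
      (Finset.mem_sdiff.1 (h2.1 hx)).2
    have e1 : (P.1 ∪ P.2) ∩ TA rp m = P.1 := by
      ext x
      simp only [Finset.mem_inter, Finset.mem_union]
      constructor
      · rintro ⟨hx1 | hx1, hx2⟩
        · exact hx1
        · exact absurd hx2 (hd₂ x hx1)
      · intro hx
        exact ⟨Or.inl hx, hsub₁ hx⟩
    have e2 : (P.1 ∪ P.2) \ TA rp m = P.2 := by
      ext x
      simp only [Finset.mem_sdiff, Finset.mem_union]
      constructor
      · rintro ⟨hx1 | hx1, hx2⟩
        · exact absurd (hsub₁ hx1) hx2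
        · exact hx1
      · intro hx
        exact ⟨Or.inr hx, hd₂ x hx⟩
    rw [Prod.ext_iff]
    exact ⟨e1, e2⟩
  · intro S hS
    rw [Finset.mem_filter] at hS
    exact fw_split h hUC hm hm' hS.2.1

end Tree
section Main

attribute [local instance] Classical.propDecidable

variable {n : ℕ} {rp : Fin n × (Fin n → Fin n)}

lemma choose_frac (t a : ℕ) (ht : 1 ≤ t) :
    (t : ℚ) / (a + 1) * ((t - 1).choose a : ℚ) = (t.choose (a + 1) : ℚ) := by
  have h1 : t * ((t - 1).choose a) = t.choose (a + 1) * (a + 1) := by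
    have h2 := Nat.add_one_mul_choose_eq (t - 1) a
    rwa [Nat.sub_add_cancel ht] at h2
  have h2 : ((a : ℚ) + 1) ≠ 0 := by positivity
  rw [div_mul_eq_mul_div, div_eq_iff h2]
  exact_mod_cast h1

lemma main_sum (h : IsRTree n rp) :
    ∀ d : ℕ, ∀ D : Finset (Fin n), UC rp D → D.card = d → ∀ k : ℕ,
      ∑ S ∈ Finset.univ.filter (fun S => SubF rp D S ∧ S.card = k), fw rp S
        = (d.choose k : ℚ) := by
  intro d
  induction d using Nat.strong_induction_on with
  | _ d IH =>
  intro D hUC hcard k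
  rcases Nat.eq_zero_or_pos d with hd0 | hdpos
  · subst hd0
    have hD : D = ∅ := Finset.card_eq_zero.1 hcard
    subst hD
    have hset : Finset.univ.filter (fun S : Finset (Fin n) => SubF rp ∅ S ∧ S.card = k)
        = if k = 0 then {(∅ : Finset (Fin n))} else ∅ := by
      split_ifs with hk
      · subst hk
        ext S
        simp only [Finset.mem_filter, Finset.mem_univ, true_and, Finset.mem_singleton,
          Finset.card_eq_zero]
        constructor
        · rintro ⟨-, h2⟩; exact h2
        · rintro rfl
          exact ⟨⟨Finset.Subset.refl _, by simp⟩, rfl⟩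
      · ext S
        simp only [Finset.mem_filter, Finset.mem_univ, true_and, Finset.notMem_empty,
          iff_false, not_and]
        rintro ⟨h1, -⟩ h2
        exact hk (by rw [← h2, Finset.card_eq_zero.2 (Finset.subset_empty.1 h1)])
    rw [hset]
    split_ifs with hk
    · subst hk
      simp [fw]
    · rw [Finset.sum_empty, Nat.choose_eq_zero_of_lt (Nat.pos_of_ne_zero hk)]
      simp
  · -- inductive step
    have hne : D.Nonempty := Finset.card_pos.1 (hcard ▸ hdpos)
    obtain ⟨m, hmD, hTAD, hm'⟩ := exists_min_elt h hUC hne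
    have ht1 : 1 ≤ (TA rp m).card := Finset.card_pos.2 ⟨m, self_mem_TA m⟩
    have htd : (TA rp m).card ≤ d := hcard ▸ Finset.card_le_card hTAD
    have hEuc : UC rp ((TA rp m).erase m) := uc_E h hTAD hm'
    have hD'uc : UC rp (D \ TA rp m) := uc_D' h hUC hmD hm'
    have hEcard : ((TA rp m).erase m).card = (TA rp m).card - 1 :=
      Finset.card_erase_of_mem (self_mem_TA m)
    have hD'card : (D \ TA rp m).card + (TA rp m).card = d := by
      rw [← hcard]; exact Finset.card_sdiff_add_card_eq_card hTAD
    have htree : ∀ a : ℕ,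
        ∑ S ∈ Finset.univ.filter (fun S => Rooted rp m S ∧ S.card = a), fw rp S
        = ((TA rp m).card.choose a : ℚ) := by
      intro a
      cases a with
      | zero =>
        have hset : Finset.univ.filter (fun S : Finset (Fin n) => Rooted rp m S ∧ S.card = 0)
            = {(∅ : Finset (Fin n))} := by
          ext S
          simp only [Finset.mem_filter, Finset.mem_univ, true_and, Finset.mem_singleton,
            Finset.card_eq_zero]
          constructor
          · rintro ⟨-, h2⟩; exact h2
          · rintro rfl; exact ⟨Or.inl rfl, rfl⟩
        rw [hset]
        simp [fw]
      | succ a =>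
        rw [tree_sum h m a, IH ((TA rp m).card - 1) (by omega) _ hEuc hEcard a]
        exact choose_frac _ a ht1
    have hD'sum : ∀ b : ℕ,
        ∑ S ∈ Finset.univ.filter (fun S => SubF rp (D \ TA rp m) S ∧ S.card = b), fw rp S
        = ((D \ TA rp m).card.choose b : ℚ) :=
      fun b => IH (D \ TA rp m).card (by omega) _ hD'uc rfl b
    rw [split_sum h hUC hmD hTAD hm' k]
    have hmap : ∀ P ∈ ((Finset.univ.filter (fun S => Rooted rp m S)) ×ˢ
        (Finset.univ.filter (fun S => SubF rp (D \ TA rp m) S))).filter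
        (fun P => P.1.card + P.2.card = k),
        (P.1.card, P.2.card) ∈ Finset.HasAntidiagonal.antidiagonal k := by
      intro P hP
      rw [Finset.HasAntidiagonal.mem_antidiagonal]
      exact (Finset.mem_filter.1 hP).2
    rw [← Finset.sum_fiberwise_of_maps_to hmap (fun P => fw rp P.1 * fw rp P.2)]
    have hfiber : ∀ ab ∈ Finset.HasAntidiagonal.antidiagonal k,
        ∑ P ∈ (((Finset.univ.filter (fun S => Rooted rp m S)) ×ˢ
          (Finset.univ.filter (fun S => SubF rp (D \ TA rp m) S))).filter
          (fun P => P.1.card + P.2.card = k)).filter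
          (fun P => (P.1.card, P.2.card) = ab),
          fw rp P.1 * fw rp P.2
        = ((TA rp m).card.choose ab.1 : ℚ) * ((D \ TA rp m).card.choose ab.2 : ℚ) := by
      intro ab hab
      rw [Finset.HasAntidiagonal.mem_antidiagonal] at hab
      have hseteq : (((Finset.univ.filter (fun S => Rooted rp m S)) ×ˢ
          (Finset.univ.filter (fun S => SubF rp (D \ TA rp m) S))).filter
          (fun P => P.1.card + P.2.card = k)).filter
          (fun P => (P.1.card, P.2.card) = ab)
          = (Finset.univ.filter (fun S => Rooted rp m S ∧ S.card = ab.1)) ×ˢ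
            (Finset.univ.filter (fun S => SubF rp (D \ TA rp m) S ∧ S.card = ab.2)) := by
        ext P
        simp only [Finset.mem_filter, Finset.mem_product, Finset.mem_univ, true_and,
          Prod.ext_iff]
        constructor
        · rintro ⟨⟨⟨ha1, ha2⟩, -⟩, h4, h5⟩
          exact ⟨⟨ha1, h4⟩, ha2, h5⟩
        · rintro ⟨⟨ha1, h4⟩, ha2, h5⟩
          exact ⟨⟨⟨ha1, ha2⟩, by omega⟩, h4, h5⟩
      rw [hseteq, Finset.sum_product, ← htree ab.1, ← hD'sum ab.2, Finset.sum_mul_sum]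
    rw [Finset.sum_congr rfl hfiber]
    rw [show d = (TA rp m).card + (D \ TA rp m).card by omega, Nat.add_choose_eq]
    push_cast
    rfl

end Main
section Final

attribute [local instance] Classical.propDecidable

variable {n : ℕ} {rp : Fin n × (Fin n → Fin n)}

lemma cardAbove_eq (j : Fin n) : cardAbove n rp j = (TA rp j).card := by
  rw [cardAbove, Nat.card_eq_fintype_card, Fintype.card_subtype]
  congr 1

lemma card_inter_eq (i : Fin n) (S : Finset (Fin n)) :
    Nat.card {x : Fin n // x ∈ S ∧ ∃ k : ℕ, rp.2^[k] x = i} = (TA rp i ∩ S).card := by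
  rw [Nat.card_eq_fintype_card, Fintype.card_subtype]
  congr 1
  ext x
  simp only [Finset.mem_filter, Finset.mem_univ, true_and, Finset.mem_inter, mem_TA]
  tauto

lemma summand_eq (S : Finset (Fin n)) :
    (∏ j : Fin n, (cardAbove n rp j : ℚ)) /
      ((∏ i ∈ S, (Nat.card {x : Fin n // x ∈ S ∧ ∃ k : ℕ, rp.2^[k] x = i} : ℚ)) *
        ∏ j ∈ Sᶜ, (cardAbove n rp j : ℚ))
    = fw rp S := by
  have hca : ∀ j : Fin n, (cardAbove n rp j : ℚ) = ((TA rp j).card : ℚ) := by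
    intro j; rw [cardAbove_eq]
  have hci : ∀ i : Fin n, ((Nat.card {x : Fin n // x ∈ S ∧ ∃ k : ℕ, rp.2^[k] x = i}) : ℚ)
      = ((TA rp i ∩ S).card : ℚ) := by
    intro i; rw [card_inter_eq]
  simp only [hca, hci]
  rw [fw, Finset.prod_div_distrib]
  rw [← Finset.prod_mul_prod_compl S (fun j => ((TA rp j).card : ℚ))]
  have h1 : (∏ i ∈ S, ((TA rp i ∩ S).card : ℚ)) ≠ 0 := by
    apply Finset.prod_ne_zero_iff.2
    intro i hi
    have : i ∈ TA rp i ∩ S := Finset.mem_inter.2 ⟨self_mem_TA i, hi⟩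
    have hpos : 0 < (TA rp i ∩ S).card := Finset.card_pos.2 ⟨i, this⟩
    exact_mod_cast hpos.ne'
  have h2 : (∏ j ∈ Sᶜ, ((TA rp j).card : ℚ)) ≠ 0 := by
    apply Finset.prod_ne_zero_iff.2
    intro j _
    have hpos : 0 < (TA rp j).card := Finset.card_pos.2 ⟨j, self_mem_TA j⟩
    exact_mod_cast hpos.ne'
  field_simp

lemma cond_iff (h : IsRTree n rp) (S : Finset (Fin n)) :
    (S = ∅ ∨ (rp.1 ∈ S ∧ ∀ i ∈ S, i ≠ rp.1 → rp.2 i ∈ S)) ↔ SubF rp Finset.univ S := by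
  constructor
  · rintro (rfl | ⟨hr, hclo⟩)
    · exact ⟨Finset.empty_subset _, by simp⟩
    · refine ⟨Finset.subset_univ _, fun i hi _ => ?_⟩
      by_cases hir : i = rp.1
      · rw [hir, h.1]; exact hr
      · exact hclo i hi hir
  · intro hS
    rcases eq_or_ne S ∅ with rfl | hSne
    · exact Or.inl rfl
    right
    have hclo : ∀ i ∈ S, rp.2 i ∈ S := fun i hi => hS.2 i hi (Finset.mem_univ _)
    obtain ⟨i₀, hi₀⟩ := Finset.nonempty_iff_ne_empty.2 hSne
    have hiter : ∀ k : ℕ, rp.2^[k] i₀ ∈ S := by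
      intro k
      induction k with
      | zero => exact hi₀
      | succ k ih => rw [Function.iterate_succ_apply']; exact hclo _ ih
    obtain ⟨k, hk⟩ := h.2 i₀
    exact ⟨hk ▸ hiter k, fun i hi _ => hclo i hi⟩

end Final


/-- For a rooted tree `T` on `n` vertices, the sum over all rooted subtrees `T₀` (subsets
containing the root and closed under parents, together with the empty subtree) of the tree
binomial coefficient `T!/(T₀! · ∏_{T' ∈ T∖T₀} T'!)` equals `2^n`.  Here `T! = ∏_j |T_j|`;
for a rooted subtree with vertex set `S`, `T₀! = ∏_{i∈S} |T_i ∩ S|`, and the trees of the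
difference forest are the subtrees `T_j` for `j ∉ S`, giving
`∏_{T'∈T∖T₀} T'! = ∏_{j∉S} |T_j|` (after cancelation of the non-root factors). -/
theorem stmt8 (n : ℕ) (hn : 1 ≤ n) (rp : Fin n × (Fin n → Fin n)) (h : IsRTree n rp) :
    ∑ S ∈ Finset.univ.filter (fun S : Finset (Fin n) =>
        S = ∅ ∨ (rp.1 ∈ S ∧ ∀ i ∈ S, i ≠ rp.1 → rp.2 i ∈ S)),
      ((∏ j : Fin n, (cardAbove n rp j : ℚ)) /
        ((∏ i ∈ S, (Nat.card {x : Fin n // x ∈ S ∧ ∃ k : ℕ, rp.2^[k] x = i} : ℚ)) *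
          ∏ j ∈ Sᶜ, (cardAbove n rp j : ℚ)))
      = 2 ^ n := by
    classical
  have hUC : UC rp Finset.univ := fun i _ j _ _ => Finset.mem_univ j
  have hsetc : Finset.univ.filter (fun S : Finset (Fin n) =>
        S = ∅ ∨ (rp.1 ∈ S ∧ ∀ i ∈ S, i ≠ rp.1 → rp.2 i ∈ S))
      = Finset.univ.filter (fun S => SubF rp Finset.univ S) := by
    ext S
    simp only [Finset.mem_filter, Finset.mem_univ, true_and]
    exact cond_iff h S
  rw [hsetc]
  rw [Finset.sum_congr rfl (fun S _ => summand_eq (rp := rp) S)]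
  have hmap : ∀ S ∈ Finset.univ.filter (fun S => SubF rp Finset.univ S),
      S.card ∈ Finset.range (n + 1) := by
    intro S _
    rw [Finset.mem_range]
    have h1 : S.card ≤ n := by simpa using Finset.card_le_univ S
    omega
  rw [← Finset.sum_fiberwise_of_maps_to hmap (fw rp)]
  have hinner : ∀ k ∈ Finset.range (n + 1),
      ∑ S ∈ (Finset.univ.filter (fun S => SubF rp Finset.univ S)).filter
        (fun S => S.card = k), fw rp S = (n.choose k : ℚ) := by
    intro k _
    rw [Finset.filter_filter]
    exact main_sum h n Finset.univ hUC (by simp) k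
  rw [Finset.sum_congr rfl hinner]
  rw [← Nat.cast_sum]
  rw [Nat.sum_range_choose]
  push_cast
  ring
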